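/- Let 0<p<1 and φ>0. Then for every natural number n, Σ_{j=0}^{∞} [e^{φ·ln(1−p)}·(−φ·ln(1−p))^j/j!]·μ_p^{∗j}({n}) = Γ(n+φ)/(n!·Γ(φ))·p^n·(1−p)^φ; that is, a compound Poisson sum of i.i.d. logarithmic Log(p) random variables, with Poisson mixing parameter −φ·ln(1−p), has the negative binomial distribution NB(φ,p). -/

import Mathlib

open MeasureTheory

/-- `j`-fold (additive) convolution power of a measure on `ℕ`, with the `0`-th power the
Dirac mass at `0`. -/
noncomputable def convPow (μ : Measure ℕ) : ℕ → Measure ℕ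
  | 0 => Measure.dirac 0
  | j + 1 => Measure.conv (convPow μ j) μ

namespace CPLaux

open Finset

noncomputable def G : ℕ → ℕ → ℝ
  | 0, n => if n = 0 then 1 else 0
  | j + 1, n => ∑ k ∈ Finset.range (n + 1), if k = 0 then 0 else G j (n - k) / k

lemma G_zero (n : ℕ) : G 0 n = if n = 0 then 1 else 0 := rfl

lemma G_succ (j n : ℕ) :
    G (j + 1) n = ∑ k ∈ Finset.range (n + 1), if k = 0 then 0 else G j (n - k) / k := rfl

lemma G_nonneg : ∀ j n, 0 ≤ G j n
  | 0, n => by rw [G_zero]; positivity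
  | j + 1, n => by
    rw [G_succ]
    refine Finset.sum_nonneg fun k _ => ?_
    split_ifs
    · exact le_refl 0
    · exact div_nonneg (G_nonneg j _) (Nat.cast_nonneg k)

lemma G_eq_zero : ∀ j n, n < j → G j n = 0
  | 0, n => fun h => absurd h (Nat.not_lt_zero n)
  | j + 1, n => fun h => by
    rw [G_succ]
    refine Finset.sum_eq_zero fun k hk => ?_
    have hk' := Finset.mem_range.1 hk
    rcases Nat.eq_zero_or_pos k with h0 | h0
    · simp [h0]
    · rw [if_neg (by omega), G_eq_zero j (n - k) (by omega), zero_div]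

/-- peel off `k = 0` and reindex `k ↦ n - k`. -/
lemma sum_shift (g : ℕ → ℝ) (N : ℕ) :
    (∑ k ∈ Finset.range (N + 1), if k = 0 then 0 else g (N - k)) =
      ∑ m ∈ Finset.range N, g m := by
  rw [Finset.sum_range_succ' (fun k => (if k = 0 then (0:ℝ) else g (N - k))) N]
  simp only [if_pos rfl, add_zero]
  rw [show (∑ i ∈ Finset.range N, if i + 1 = 0 then (0:ℝ) else g (N - (i + 1))) =
      ∑ i ∈ Finset.range N, g (N - 1 - i) from
    Finset.sum_congr rfl fun i hi => by rw [if_neg (Nat.succ_ne_zero i)]; congr 1; omega]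
  simpa using Finset.sum_range_reflect g N

/-- extend a truncated sum to a longer range. -/
lemma sum_extend (h : ℕ → ℝ) {N n : ℕ} (hN : N ≤ n) :
    (∑ l ∈ Finset.range (n + 1), if N < l then 0 else h l) =
      ∑ l ∈ Finset.range (N + 1), h l := by
  rw [← Finset.sum_subset (Finset.range_subset_range.2 (by omega) :
      Finset.range (N+1) ⊆ Finset.range (n+1))
      (fun x _ hx => by rw [if_pos (by simpa using hx : N < x)])]
  exact Finset.sum_congr rfl fun l hl => if_neg (by simp at hl; omega)

/-- generic double-sum unfolding with guards. -/
lemma double_sum (v : ℕ → ℕ → ℝ) (n : ℕ) :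
    (∑ k ∈ Finset.range (n + 1), if k = 0 then 0 else
        ∑ l ∈ Finset.range ((n - k) + 1), if l = 0 then 0 else v k l) =
      ∑ k ∈ Finset.range (n + 1), ∑ l ∈ Finset.range (n + 1),
        if k = 0 ∨ l = 0 ∨ n < k + l then 0 else v k l := by
  refine Finset.sum_congr rfl fun k hk => ?_
  have hk' := Finset.mem_range.1 hk
  rcases Nat.eq_zero_or_pos k with h0 | h0
  · subst h0
    rw [if_pos rfl]
    exact (Finset.sum_eq_zero fun l _ => if_pos (Or.inl rfl)).symm
  rw [if_neg (by omega)]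
  rw [show (∑ l ∈ Finset.range (n + 1),
        if k = 0 ∨ l = 0 ∨ n < k + l then 0 else v k l) =
      ∑ l ∈ Finset.range (n + 1),
        if n - k < l then 0 else if l = 0 then (0:ℝ) else v k l from
    Finset.sum_congr rfl fun l hl => by
      have hl' := Finset.mem_range.1 hl
      split_ifs with h1 h2 h3 h4 h5 <;> first | rfl | omega]
  exact (sum_extend (fun l => if l = 0 then (0:ℝ) else v k l) (by omega)).symm

/-- the key recursion: `n · G_{j+1}(n) = (j+1) · ∑_{m<n} G_j(m)`. -/
lemma n_mul_G : ∀ j n : ℕ, (n : ℝ) * G (j + 1) n = ((j : ℝ) + 1) * ∑ m ∈ Finset.range n, G j m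
  | 0, n => by
    rcases Nat.eq_zero_or_pos n with h0 | h0
    · subst h0; simp
    rw [G_succ]
    have hG1 : (∑ k ∈ Finset.range (n + 1), if k = 0 then 0 else G 0 (n - k) / k)
        = 1 / (n : ℝ) := by
      rw [Finset.sum_eq_single_of_mem n (Finset.mem_range.2 (by omega))]
      · rw [if_neg (by omega), Nat.sub_self, G_zero, if_pos rfl]
      · intro k hk hne
        have hk' := Finset.mem_range.1 hk
        rcases Nat.eq_zero_or_pos k with h1 | h1
        · simp [h1]
        · rw [if_neg (by omega), G_zero, if_neg (by omega), zero_div]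
    have hS : (∑ m ∈ Finset.range n, G 0 m) = 1 := by
      rw [Finset.sum_eq_single_of_mem 0 (Finset.mem_range.2 (by omega))]
      · rw [G_zero, if_pos rfl]
      · intro m _ hm; rw [G_zero, if_neg hm]
    rw [hG1, hS]
    have : (n : ℝ) ≠ 0 := Nat.cast_ne_zero.2 (by omega)
    field_simp
    simp
  | j + 1, n => by
    have IH := n_mul_G j
    rw [G_succ (j + 1) n, Finset.mul_sum]
    have h1 : ∀ k ∈ Finset.range (n + 1),
        (n : ℝ) * (if k = 0 then 0 else G (j + 1) (n - k) / k)
        = (if k = 0 then 0 else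
              (((j : ℝ) + 1) * ∑ m ∈ Finset.range (n - k), G j m) / k)
          + (if k = 0 then 0 else G (j + 1) (n - k)) := by
      intro k hk
      have hk' := Finset.mem_range.1 hk
      rcases Nat.eq_zero_or_pos k with h0 | h0
      · simp [h0]
      rw [if_neg (by omega), if_neg (by omega), if_neg (by omega)]
      have hcast : (n : ℝ) = ((n - k : ℕ) : ℝ) + (k : ℝ) := by
        rw [Nat.cast_sub (by omega : k ≤ n)]; ring
      have hk0 : (k : ℝ) ≠ 0 := Nat.cast_ne_zero.2 (by omega)
      rw [hcast, ← IH (n - k)]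
      field_simp
    rw [Finset.sum_congr rfl h1, Finset.sum_add_distrib,
      sum_shift (fun m => G (j + 1) m) n]
    have h2 : (∑ k ∈ Finset.range (n + 1), if k = 0 then 0 else
          (((j : ℝ) + 1) * ∑ m ∈ Finset.range (n - k), G j m) / k)
        = ((j : ℝ) + 1) * ∑ k ∈ Finset.range (n + 1),
            (if k = 0 then 0 else (∑ m ∈ Finset.range (n - k), G j m) / k) := by
      rw [Finset.mul_sum]
      refine Finset.sum_congr rfl fun k _ => ?_
      split_ifs
      · rw [mul_zero]
      · ring
    rw [h2]
    have core : (∑ k ∈ Finset.range (n + 1),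
          (if k = 0 then 0 else (∑ m ∈ Finset.range (n - k), G j m) / k))
        = ∑ m ∈ Finset.range n, G (j + 1) m := by
      have lhs_eq : (∑ k ∈ Finset.range (n + 1),
            (if k = 0 then 0 else (∑ m ∈ Finset.range (n - k), G j m) / k))
          = ∑ k ∈ Finset.range (n + 1), ∑ l ∈ Finset.range (n + 1),
              if k = 0 ∨ l = 0 ∨ n < k + l then 0 else G j (n - k - l) / k := by
        rw [← double_sum (fun k l => G j (n - k - l) / k) n]
        refine Finset.sum_congr rfl fun k _ => ?_
        rcases Nat.eq_zero_or_pos k with h0 | h0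
        · simp [h0]
        rw [if_neg (by omega), if_neg (by omega), Finset.sum_div,
          ← sum_shift (fun m => G j m / k) (n - k)]
      have rhs_eq : (∑ m ∈ Finset.range n, G (j + 1) m)
          = ∑ k ∈ Finset.range (n + 1), ∑ l ∈ Finset.range (n + 1),
              if k = 0 ∨ l = 0 ∨ n < k + l then 0 else G j (n - k - l) / l := by
        rw [← double_sum (fun k l => G j (n - k - l) / l) n,
          ← sum_shift (fun m => G (j + 1) m) n]
        refine Finset.sum_congr rfl fun k _ => ?_
        rcases Nat.eq_zero_or_pos k with h0 | h0
        · simp [h0]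
        rw [if_neg (by omega), if_neg (by omega), G_succ]
      rw [lhs_eq, rhs_eq, Finset.sum_comm]
      refine Finset.sum_congr rfl fun k hk => Finset.sum_congr rfl fun l hl => ?_
      have hk' := Finset.mem_range.1 hk
      have hl' := Finset.mem_range.1 hl
      have hcond : (l = 0 ∨ k = 0 ∨ n < l + k) ↔ (k = 0 ∨ l = 0 ∨ n < k + l) := by
        constructor <;> (intro h; omega)
      rw [if_congr hcond rfl rfl, show n - l - k = n - k - l by omega]
    rw [core]
    push_cast
    ring

noncomputable def b (φ : ℝ) (n : ℕ) : ℝ :=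
  ∑ j ∈ Finset.range (n + 1), φ ^ j / (j.factorial : ℝ) * G j n

lemma b_zero (φ : ℝ) : b φ 0 = 1 := by
  simp [b, G_zero]

lemma n_mul_G_zero (n : ℕ) : (n : ℝ) * G 0 n = 0 := by
  rcases Nat.eq_zero_or_pos n with h | h
  · subst h; simp
  · rw [G_zero, if_neg (by omega), mul_zero]

lemma b_rec (φ : ℝ) (n : ℕ) : (n : ℝ) * b φ n = φ * ∑ m ∈ Finset.range n, b φ m := by
  rw [b, Finset.mul_sum]
  rw [show (∑ j ∈ Finset.range (n + 1), (n : ℝ) * (φ ^ j / (j.factorial : ℝ) * G j n))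
      = ∑ j ∈ Finset.range (n + 1), φ ^ j / (j.factorial : ℝ) * ((n : ℝ) * G j n) from
    Finset.sum_congr rfl fun j _ => by ring]
  rw [Finset.sum_range_succ' (fun j => φ ^ j / (j.factorial : ℝ) * ((n : ℝ) * G j n)) n]
  rw [n_mul_G_zero, mul_zero, add_zero]
  rw [show (∑ i ∈ Finset.range n, φ ^ (i + 1) / ((i + 1).factorial : ℝ) *
        ((n : ℝ) * G (i + 1) n))
      = ∑ i ∈ Finset.range n, φ * (φ ^ i / (i.factorial : ℝ) *
        ∑ m ∈ Finset.range n, G i m) from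
    Finset.sum_congr rfl fun i _ => by
      rw [n_mul_G i n, Nat.factorial_succ]
      have h1 : ((i.factorial : ℝ)) ≠ 0 := Nat.cast_ne_zero.2 i.factorial_ne_zero
      have h2 : ((i : ℝ) + 1) ≠ 0 := by positivity
      push_cast
      field_simp
      ring]
  rw [← Finset.mul_sum]
  congr 1
  rw [show (∑ i ∈ Finset.range n, φ ^ i / (i.factorial : ℝ) * ∑ m ∈ Finset.range n, G i m)
      = ∑ i ∈ Finset.range n, ∑ m ∈ Finset.range n,
          φ ^ i / (i.factorial : ℝ) * G i m from
    Finset.sum_congr rfl fun i _ => Finset.mul_sum _ _ _]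
  rw [Finset.sum_comm]
  refine Finset.sum_congr rfl fun m hm => ?_
  have hm' := Finset.mem_range.1 hm
  rw [b]
  refine (Finset.sum_subset (Finset.range_subset_range.2 (by omega)) fun i hi hni => ?_).symm
  have : m < i := by simp at hi hni ⊢; omega
  rw [G_eq_zero i m this, mul_zero]

lemma b_closed (φ : ℝ) (hφ : 0 < φ) :
    ∀ n : ℕ, b φ n = Real.Gamma ((n : ℝ) + φ) / ((n.factorial : ℝ) * Real.Gamma φ)
  | 0 => by
    rw [b_zero]
    have h := Real.Gamma_pos_of_pos hφ
    simp [div_self h.ne']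
  | n + 1 => by
    have IH := b_closed φ hφ n
    have hrec : ((n : ℝ) + 1) * b φ (n + 1) = ((n : ℝ) + φ) * b φ n := by
      have h1 := b_rec φ (n + 1)
      have h2 := b_rec φ n
      rw [Finset.sum_range_succ, mul_add, ← h2] at h1
      push_cast at h1 ⊢
      linarith [h1]
    have hn1 : ((n : ℝ) + 1) ≠ 0 := by positivity
    have hb : b φ (n + 1) = ((n : ℝ) + φ) * b φ n / ((n : ℝ) + 1) := by
      field_simp at hrec ⊢
      linarith [hrec]
    rw [hb, IH]
    have hΓ : Real.Gamma ((n : ℝ) + 1 + φ) = ((n : ℝ) + φ) * Real.Gamma ((n : ℝ) + φ) := by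
      rw [show (n : ℝ) + 1 + φ = ((n : ℝ) + φ) + 1 by ring,
        Real.Gamma_add_one (by positivity)]
    have hfac : (((n + 1).factorial : ℝ)) = ((n : ℝ) + 1) * (n.factorial : ℝ) := by
      rw [Nat.factorial_succ]; push_cast; ring
    have h1 : ((n.factorial : ℝ)) ≠ 0 := Nat.cast_ne_zero.2 n.factorial_ne_zero
    have h2 : Real.Gamma φ ≠ 0 := (Real.Gamma_pos_of_pos hφ).ne'
    rw [hfac]
    push_cast
    rw [hΓ]
    field_simp

open MeasureTheory

lemma conv_singleton (ρ ν : Measure ℕ) [SFinite ρ] [SFinite ν] (n : ℕ) :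
    ρ.conv ν {n} = ∑ k ∈ Finset.range (n + 1), ρ {n - k} * ν {k} := by
  rw [Measure.conv, Measure.map_apply (measurable_of_countable _) (measurableSet_singleton n)]
  have hset : (fun x : ℕ × ℕ => x.1 + x.2) ⁻¹' {n}
      = ⋃ k ∈ (Finset.range (n + 1) : Finset ℕ), ({(n - k : ℕ)} ×ˢ {k} : Set (ℕ × ℕ)) := by
    ext ⟨a, c⟩
    simp only [Set.mem_preimage, Set.mem_singleton_iff, Set.mem_iUnion, Set.mem_prod,
      Finset.mem_range]
    constructor
    · intro h; exact ⟨c, by omega, by omega, rfl⟩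
    · rintro ⟨k, hk, rfl, rfl⟩; omega
  rw [hset, measure_biUnion_finset ?_ fun k _ =>
    (measurableSet_singleton _).prod (measurableSet_singleton _)]
  · exact Finset.sum_congr rfl fun k _ => Measure.prod_prod _ _
  · intro k _ l _ hkl
    refine Set.disjoint_left.2 ?_
    rintro ⟨a, c⟩ ⟨_, h1⟩ ⟨_, h2⟩
    simp only [Set.mem_singleton_iff] at h1 h2
    exact hkl (h1 ▸ h2)

lemma convPow_isProb (μ : Measure ℕ) [IsProbabilityMeasure μ] :
    ∀ j, IsProbabilityMeasure (convPow μ j)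
  | 0 => by
    show IsProbabilityMeasure (Measure.dirac 0)
    infer_instance
  | j + 1 => by
    haveI := convPow_isProb μ j
    show IsProbabilityMeasure ((convPow μ j).conv μ)
    infer_instance

end CPLaux

/-- A compound Poisson sum of i.i.d. logarithmic `Log(p)` random variables, with Poisson
mixing parameter `-φ ln(1-p)`, has the negative binomial distribution `NB(φ, p)`:
for every `n : ℕ`,
`∑_j e^{φ ln(1-p)} (-φ ln(1-p))^j / j! ⬝ μ_p^{*j}{n} = Γ(n+φ)/(n! Γ(φ)) p^n (1-p)^φ`. -/
theorem compound_poisson_log_eq_negBinomial (p φ : ℝ) (hp0 : 0 < p) (hp1 : p < 1)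
    (hφ : 0 < φ) (μ : Measure ℕ) [IsProbabilityMeasure μ]
    (hμ0 : μ {0} = 0)
    (hμ : ∀ k : ℕ, 1 ≤ k → μ {k} = ENNReal.ofReal (-p ^ k / ((k : ℝ) * Real.log (1 - p))))
    (n : ℕ) :
    ∑' j : ℕ,
        ENNReal.ofReal (Real.exp (φ * Real.log (1 - p)) *
            (-φ * Real.log (1 - p)) ^ j / (j.factorial : ℝ)) * convPow μ j {n} =
      ENNReal.ofReal (Real.Gamma ((n : ℝ) + φ) / ((n.factorial : ℝ) * Real.Gamma φ) *
        p ^ n * (1 - p) ^ φ) := by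
  classical
  have h1p : 0 < 1 - p := by linarith
  set L := Real.log (1 - p) with hL
  have hLneg : L < 0 := Real.log_neg (by linarith) (by linarith)
  set c : ℝ := -L with hc
  have hc0 : 0 < c := by rw [hc]; linarith
  -- the pmf of μ in a convenient form
  have hμk : ∀ k : ℕ, μ {k} = ENNReal.ofReal (if k = 0 then 0 else p ^ k / ((k : ℝ) * c)) := by
    intro k
    rcases Nat.eq_zero_or_pos k with h | h
    · subst h; simpa using hμ0
    · rw [hμ k h, if_neg (by omega)]
      congr 1
      rw [hc, mul_neg, div_neg, neg_div]
  have hprob := fun j => CPLaux.convPow_isProb μ j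
  -- the pmf of the convolution powers
  have hconv : ∀ j m : ℕ, convPow μ j {m}
      = ENNReal.ofReal (p ^ m / c ^ j * CPLaux.G j m) := by
    intro j
    induction j with
    | zero =>
      intro m
      show Measure.dirac 0 {m} = _
      rcases Nat.eq_zero_or_pos m with h | h
      · subst h
        have h1 : (Measure.dirac 0 : Measure ℕ) {0} = 1 := Measure.dirac_apply_of_mem rfl
        rw [h1, CPLaux.G_zero, if_pos rfl]
        simp
      · rw [Measure.dirac_apply' _ (measurableSet_singleton m),
          Set.indicator_of_notMem (by simp only [Set.mem_singleton_iff]; omega),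
          CPLaux.G_zero, if_neg (by omega), mul_zero, ENNReal.ofReal_zero]
    | succ j IH =>
      intro m
      haveI := hprob j
      show (convPow μ j).conv μ {m} = _
      rw [CPLaux.conv_singleton]
      have hterm : ∀ k ∈ Finset.range (m + 1),
          convPow μ j {m - k} * μ {k}
          = ENNReal.ofReal (if k = 0 then 0 else
              p ^ m / c ^ (j + 1) * (CPLaux.G j (m - k) / (k : ℝ))) := by
        intro k hk
        have hk' := Finset.mem_range.1 hk
        rw [IH (m - k), hμk k, ← ENNReal.ofReal_mul (mul_nonneg
          (div_nonneg (pow_nonneg hp0.le _) (pow_nonneg hc0.le _)) (CPLaux.G_nonneg _ _))]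
        congr 1
        rcases Nat.eq_zero_or_pos k with h | h
        · subst h; simp
        · rw [if_neg (by omega), if_neg (by omega)]
          have hpk : p ^ m = p ^ (m - k) * p ^ k := by rw [← pow_add]; congr 1; omega
          have hkR : (k : ℝ) ≠ 0 := Nat.cast_ne_zero.2 (by omega)
          rw [hpk, pow_succ c j]
          field_simp
      rw [Finset.sum_congr rfl hterm, ← ENNReal.ofReal_sum_of_nonneg (fun k _ => by
        split_ifs with h
        · exact le_refl 0
        · exact mul_nonneg (div_nonneg (pow_nonneg hp0.le _) (pow_nonneg hc0.le _))
            (div_nonneg (CPLaux.G_nonneg _ _) (Nat.cast_nonneg _)))]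
      congr 1
      rw [CPLaux.G_succ, Finset.mul_sum]
      refine Finset.sum_congr rfl fun k _ => ?_
      split_ifs with h
      · rw [mul_zero]
      · rfl
  -- the tsum reduces to a finite sum
  rw [tsum_eq_sum (s := Finset.range (n + 1)) (fun j hj => by
    rw [hconv j n, CPLaux.G_eq_zero j n (by
        simp only [Finset.mem_range] at hj; omega),
      mul_zero, ENNReal.ofReal_zero, mul_zero])]
  have hterm2 : ∀ j ∈ Finset.range (n + 1),
      ENNReal.ofReal (Real.exp (φ * L) * (-φ * L) ^ j / (j.factorial : ℝ)) * convPow μ j {n}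
      = ENNReal.ofReal (Real.exp (φ * L) * p ^ n *
          (φ ^ j / (j.factorial : ℝ) * CPLaux.G j n)) := by
    intro j _
    rw [hconv j n, ← ENNReal.ofReal_mul (by
      have h1 : -φ * L = φ * c := by rw [hc]; ring
      rw [h1]
      exact div_nonneg (mul_nonneg (Real.exp_nonneg _)
        (pow_nonneg (mul_nonneg hφ.le hc0.le) _)) (Nat.cast_nonneg _))]
    congr 1
    have h1 : -φ * L = φ * c := by rw [hc]; ring
    have h2 : (c : ℝ) ^ j ≠ 0 := by positivity
    have h3 : ((j.factorial : ℝ)) ≠ 0 := Nat.cast_ne_zero.2 j.factorial_ne_zero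
    rw [h1, mul_pow]
    field_simp
  rw [Finset.sum_congr rfl hterm2, ← ENNReal.ofReal_sum_of_nonneg (fun j _ =>
    mul_nonneg (mul_nonneg (Real.exp_nonneg _) (pow_nonneg hp0.le _))
      (mul_nonneg (div_nonneg (pow_nonneg hφ.le _) (Nat.cast_nonneg _))
        (CPLaux.G_nonneg _ _)))]
  congr 1
  rw [← Finset.mul_sum]
  have hb : (∑ j ∈ Finset.range (n + 1), φ ^ j / (j.factorial : ℝ) * CPLaux.G j n)
      = CPLaux.b φ n := rfl
  rw [hb, CPLaux.b_closed φ hφ n, Real.rpow_def_of_pos h1p, ← hL, mul_comm L φ]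
  ring
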